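/- arXiv:2110.04716 — 2 statements merged into one kernel-verified Lean document; each statement's English description precedes it below -/
import Mathlib

section
/- Let k(t) = (1+t^2)^{-3/2}. The Fourier transform k̂ is strictly decreasing on [0,∞), i.e., for 0 ≤ ξ₁ < ξ₂ one has k̂(ξ₂) < k̂(ξ₁). -/
open MeasureTheory

/-- `k(t) = (1+t^2)^{-3/2}`. -/
noncomputable def k (t : ℝ) : ℝ := (1 + t ^ 2) ^ (-(3 : ℝ) / 2)

/-- The Fourier transform `k̂(ξ) = ∫ e^{-2πiξt} k(t) dt`. -/
noncomputable def khat (ξ : ℝ) : ℂ :=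
  ∫ t : ℝ, Complex.exp ((-(2 * Real.pi * ξ * t) : ℝ) * Complex.I) * (k t : ℂ)

namespace KhatAux

open Real Set Complex

noncomputable def g (t s : ℝ) : ℝ := Real.sqrt s * Real.exp (-(1 + t ^ 2) * s)

noncomputable def e (ξ t : ℝ) : ℂ :=
  Complex.exp ((-(2 * Real.pi * ξ * t) : ℝ) * Complex.I)

lemma e_norm (ξ t : ℝ) : ‖e ξ t‖ = 1 := Complex.norm_exp_ofReal_mul_I _

lemma ofReal_setIntegral (f : ℝ → ℝ) :
    ∫ s in Ioi (0:ℝ), ((f s : ℝ) : ℂ) = ((∫ s in Ioi (0:ℝ), f s : ℝ) : ℂ) :=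
  integral_ofReal (𝕜 := ℂ)

lemma gamma_rep (t : ℝ) :
    ∫ s in Ioi (0:ℝ), g t s = Real.Gamma (3/2) * k t := by
  have hb : (0:ℝ) < 1 + t ^ 2 := by positivity
  have h := integral_rpow_mul_exp_neg_mul_rpow (p := 1) (q := 1/2) (b := 1 + t ^ 2)
    one_pos (by norm_num) hb
  have heq : ∀ s ∈ Ioi (0:ℝ), g t s = s ^ ((1:ℝ)/2) * Real.exp (-(1 + t^2) * s ^ (1:ℝ)) := by
    intro s hs
    simp only [g, Real.rpow_one, Real.sqrt_eq_rpow]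
  rw [setIntegral_congr_fun measurableSet_Ioi heq, h, k]
  rw [show -((1:ℝ)/2 + 1) / 1 = -(3:ℝ)/2 by norm_num, show ((1:ℝ)/2 + 1)/1 = 3/2 by norm_num]
  ring

lemma inner_gauss (ξ : ℝ) {s : ℝ} (hs : 0 < s) :
    (∫ t : ℝ, e ξ t * (g t s : ℂ))
      = ((Real.sqrt Real.pi * (Real.exp (-s) * Real.exp (-(Real.pi ^ 2 * ξ ^ 2) / s)) : ℝ) : ℂ) := by
  have hsc : (0:ℝ) < ((s : ℂ)).re := by simpa using hs
  have key := fourierIntegral_gaussian (b := (s:ℂ)) hsc (-(2 * Real.pi * ξ) : ℂ)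
  have h1 : ∀ t : ℝ, e ξ t * (g t s : ℂ)
      = ((Real.sqrt s * Real.exp (-s) : ℝ) : ℂ) *
        (Complex.exp (Complex.I * (-(2 * Real.pi * ξ) : ℂ) * (t : ℂ)) *
          Complex.exp (-(s:ℂ) * (t:ℂ) ^ 2)) := by
    intro t
    rw [e, g, Complex.ofReal_mul, Complex.ofReal_exp, mul_left_comm, ← Complex.exp_add,
      ← Complex.exp_add]
    push_cast
    conv_rhs => rw [mul_assoc, ← Complex.exp_add]
    congr 1
    ring_nf
  simp_rw [h1]
  rw [integral_const_mul, key]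
  have h2 : ((Real.pi : ℂ) / (s:ℂ)) ^ ((1:ℂ)/2) = ((Real.sqrt (Real.pi / s) : ℝ) : ℂ) := by
    rw [Real.sqrt_eq_rpow, Complex.ofReal_cpow (by positivity)]
    push_cast
    ring_nf
  have h3 : (-(-(2 * (Real.pi:ℂ) * ξ)) ^ 2 / (4 * (s:ℂ))) = ((-(Real.pi ^ 2 * ξ ^ 2) / s : ℝ) : ℂ) := by
    have : (s:ℂ) ≠ 0 := by exact_mod_cast hs.ne'
    push_cast
    field_simp
    ring
  rw [h2, h3, ← Complex.ofReal_exp]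
  rw [show ((Real.sqrt s * Real.exp (-s) :ℝ):ℂ) * ((((Real.sqrt (Real.pi/s)):ℝ):ℂ) * ((Real.exp (-(Real.pi^2*ξ^2)/s) : ℝ) : ℂ)) = (((Real.sqrt s * Real.sqrt (Real.pi/s)) * (Real.exp (-s) * Real.exp (-(Real.pi^2*ξ^2)/s)) : ℝ) : ℂ) by push_cast; ring]
  norm_cast
  rw [← Real.sqrt_mul hs.le, mul_div_cancel₀ _ hs.ne']

lemma k_continuous : Continuous k := by
  apply Continuous.rpow_const (by continuity)
  intro t; left; positivity

lemma k_nonneg (t : ℝ) : 0 ≤ k t := by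
  unfold k; positivity

lemma k_integrable : Integrable k := by
  refine integrable_inv_one_add_sq.mono' k_continuous.aestronglyMeasurable ?_
  refine Filter.Eventually.of_forall fun t => ?_
  rw [Real.norm_eq_abs, _root_.abs_of_nonneg (k_nonneg t)]
  unfold k
  rw [show (-3:ℝ)/2 = -(3/2) by norm_num, Real.rpow_neg (by positivity)]
  rw [inv_le_inv₀ (by positivity) (by positivity)]
  calc (1 + t^2) = (1 + t^2) ^ (1:ℝ) := by rw [Real.rpow_one]
    _ ≤ (1 + t^2) ^ ((3:ℝ)/2) := by
        apply Real.rpow_le_rpow_of_exponent_le (by nlinarith [sq_nonneg t]) (by norm_num)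

lemma sqrt_exp_integrableOn : IntegrableOn (fun s => Real.sqrt s * Real.exp (-s)) (Ioi (0:ℝ)) := by
  have h := Real.GammaIntegral_convergent (s := 3/2) (by norm_num)
  refine h.congr_fun (fun s hs => ?_) measurableSet_Ioi
  dsimp only
  rw [show (3:ℝ)/2 - 1 = 1/2 by norm_num, ← Real.sqrt_eq_rpow]
  ring

lemma g_integrableOn (t : ℝ) : IntegrableOn (fun s => g t s) (Ioi (0:ℝ)) := by
  refine sqrt_exp_integrableOn.mono' ?_ ?_
  · exact ((Real.continuous_sqrt.mul (by continuity)).aestronglyMeasurable)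
  · refine (ae_restrict_iff' measurableSet_Ioi).2 (Filter.Eventually.of_forall fun s hs => ?_)
    rw [Real.norm_eq_abs, g, _root_.abs_of_nonneg (by positivity)]
    have : Real.exp (-(1 + t ^ 2) * s) ≤ Real.exp (-s) := by
      apply Real.exp_le_exp.2; nlinarith [sq_nonneg t, le_of_lt (show (0:ℝ) < s from hs)]
    exact mul_le_mul_of_nonneg_left this (Real.sqrt_nonneg s)

lemma g_nonneg (t s : ℝ) : 0 ≤ g t s := by unfold g; positivity

set_option maxHeartbeats 1000000 in
lemma prod_integrable (ξ : ℝ) :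
    Integrable (Function.uncurry fun t s => e ξ t * (g t s : ℂ))
      (volume.prod (volume.restrict (Ioi (0:ℝ)))) := by
  rw [Function.uncurry_def]
  have hcont : Continuous fun p : ℝ × ℝ => e ξ p.1 * (g p.1 p.2 : ℂ) := by
    apply Continuous.mul
    · unfold e
      exact Complex.continuous_exp.comp
        ((Complex.continuous_ofReal.comp ((continuous_const.mul continuous_fst).neg)).mul
          continuous_const)
    · apply Complex.continuous_ofReal.comp
      unfold g
      exact (Real.continuous_sqrt.comp continuous_snd).mul
        (Real.continuous_exp.comp
          (((continuous_const.add (continuous_fst.pow 2)).neg).mul continuous_snd))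
  rw [MeasureTheory.integrable_prod_iff hcont.aestronglyMeasurable]
  constructor
  · refine Filter.Eventually.of_forall fun t => ?_
    have hg : Integrable (fun s => ((g t s : ℝ) : ℂ)) (volume.restrict (Ioi (0:ℝ))) :=
      (g_integrableOn t).ofReal
    exact Integrable.const_mul hg (e ξ t)
  · have heq : (fun t => ∫ s in Ioi (0:ℝ), ‖e ξ t * (g t s : ℂ)‖)
        = fun t => Real.Gamma (3/2) * k t := by
      funext t
      rw [← gamma_rep t]
      refine setIntegral_congr_fun measurableSet_Ioi fun s hs => ?_
      rw [norm_mul, e_norm, one_mul, Complex.norm_real, Real.norm_eq_abs,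
        _root_.abs_of_nonneg (g_nonneg t s)]
    rw [heq]
    exact k_integrable.const_mul _

lemma J_integrableOn {c : ℝ} (hc : 0 ≤ c) :
    IntegrableOn (fun s => Real.exp (-s) * Real.exp (-c/s)) (Ioi (0:ℝ)) := by
  refine (exp_neg_integrableOn_Ioi 0 one_pos).mono' ?_ ?_
  · apply ContinuousOn.aestronglyMeasurable ?_ measurableSet_Ioi
    apply ContinuousOn.mul (Continuous.continuousOn (by continuity))
    apply Real.continuous_exp.comp_continuousOn
    exact (continuousOn_const (c := -c)).div continuousOn_id fun s hs => ne_of_gt hs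
  · refine (ae_restrict_iff' measurableSet_Ioi).2 (Filter.Eventually.of_forall fun s hs => ?_)
    rw [Real.norm_eq_abs, _root_.abs_of_nonneg (by positivity)]
    have h1 : Real.exp (-c/s) ≤ 1 := by
      rw [Real.exp_le_one_iff]
      have : (0:ℝ) < s := hs
      rw [neg_div]
      simp only [neg_nonpos]
      positivity
    calc Real.exp (-s) * Real.exp (-c/s) ≤ Real.exp (-s) * 1 :=
          mul_le_mul_of_nonneg_left h1 (Real.exp_pos _).le
      _ = Real.exp (-1 * s) := by rw [mul_one]; norm_num
    
lemma khat_eq (ξ : ℝ) :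
    khat ξ = (((Real.Gamma (3/2))⁻¹ * (Real.sqrt Real.pi *
      ∫ s in Ioi (0:ℝ), Real.exp (-s) * Real.exp (-(Real.pi ^ 2 * ξ ^ 2)/s)) : ℝ) : ℂ) := by
  have hΓ : (0:ℝ) < Real.Gamma (3/2) := Real.Gamma_pos_of_pos (by norm_num)
  have hk : ∀ t : ℝ, (k t : ℂ)
      = (((Real.Gamma (3/2))⁻¹ : ℝ) : ℂ) * ∫ s in Ioi (0:ℝ), ((g t s : ℝ) : ℂ) := by
    intro t
    rw [ofReal_setIntegral, gamma_rep]
    push_cast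
    rw [inv_mul_cancel_left₀ (by exact_mod_cast hΓ.ne' : (Real.Gamma (3/2) : ℂ) ≠ 0)]
  calc khat ξ = ∫ t : ℝ, e ξ t * (k t : ℂ) := rfl
    _ = ∫ t : ℝ, (((Real.Gamma (3/2))⁻¹ : ℝ) : ℂ) * ∫ s in Ioi (0:ℝ), e ξ t * (g t s : ℂ) := by
        congr 1; funext t
        rw [hk, integral_const_mul (e ξ t)]
        ring
    _ = (((Real.Gamma (3/2))⁻¹ : ℝ) : ℂ) * ∫ t : ℝ, ∫ s in Ioi (0:ℝ), e ξ t * (g t s : ℂ) :=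
        integral_const_mul _ _
    _ = (((Real.Gamma (3/2))⁻¹ : ℝ) : ℂ) * ∫ s in Ioi (0:ℝ), ∫ t : ℝ, e ξ t * (g t s : ℂ) := by
        rw [MeasureTheory.integral_integral_swap (prod_integrable ξ)]
    _ = (((Real.Gamma (3/2))⁻¹ : ℝ) : ℂ) * ∫ s in Ioi (0:ℝ),
          ((Real.sqrt Real.pi * (Real.exp (-s) * Real.exp (-(Real.pi ^ 2 * ξ ^ 2) / s)) : ℝ) : ℂ) := by
        congr 1
        exact setIntegral_congr_fun measurableSet_Ioi fun s hs => inner_gauss ξ hs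
    _ = _ := by
        rw [ofReal_setIntegral, MeasureTheory.integral_const_mul, ← Complex.ofReal_mul]

lemma J_strictAnti {c₁ c₂ : ℝ} (h0 : 0 ≤ c₁) (h : c₁ < c₂) :
    (∫ s in Ioi (0:ℝ), Real.exp (-s) * Real.exp (-c₂/s))
      < ∫ s in Ioi (0:ℝ), Real.exp (-s) * Real.exp (-c₁/s) := by
  have h1 := J_integrableOn h0
  have h2 := J_integrableOn (le_trans h0 h.le)
  have hlt : ∀ s : ℝ, 0 < s →
      Real.exp (-s) * Real.exp (-c₂/s) < Real.exp (-s) * Real.exp (-c₁/s) := by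
    intro s hs'
    have hexp : Real.exp (-c₂/s) < Real.exp (-c₁/s) := by
      apply Real.exp_lt_exp.2
      rw [div_lt_div_iff₀ hs' hs']
      nlinarith
    exact mul_lt_mul_of_pos_left hexp (Real.exp_pos _)
  have hdiff : (0:ℝ) < ∫ s in Ioi (0:ℝ),
      (Real.exp (-s) * Real.exp (-c₁/s) - Real.exp (-s) * Real.exp (-c₂/s)) := by
    have hfi : IntegrableOn
        (fun s => Real.exp (-s) * Real.exp (-c₁/s) - Real.exp (-s) * Real.exp (-c₂/s))
        (Ioi (0:ℝ)) := h1.sub h2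
    rw [setIntegral_pos_iff_support_of_nonneg_ae ?hnn hfi]
    case hnn =>
      refine (ae_restrict_iff' measurableSet_Ioi).2 (Filter.Eventually.of_forall fun s hs => ?_)
      exact sub_nonneg.2 (hlt s hs).le
    have hsub : Ioi (0:ℝ) ⊆ Function.support
        (fun s => Real.exp (-s) * Real.exp (-c₁/s) - Real.exp (-s) * Real.exp (-c₂/s)) := by
      intro s hs
      exact ne_of_gt (sub_pos.2 (hlt s hs))
    rw [Set.inter_eq_right.2 hsub, Real.volume_Ioi]
    exact ENNReal.zero_lt_top
  rw [integral_sub h1 h2] at hdiff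
  linarith

end KhatAux

/-- `k̂` is strictly decreasing on `[0, ∞)`. -/
theorem khat_strictAnti : ∀ ξ₁ ξ₂ : ℝ, 0 ≤ ξ₁ → ξ₁ < ξ₂ → (khat ξ₂).re < (khat ξ₁).re := by
  intro ξ₁ ξ₂ hξ₁ hlt
  rw [KhatAux.khat_eq ξ₁, KhatAux.khat_eq ξ₂, Complex.ofReal_re, Complex.ofReal_re]
  have hΓ : (0:ℝ) < (Real.Gamma (3/2))⁻¹ := by
    exact inv_pos.2 (Real.Gamma_pos_of_pos (by norm_num))
  have hπ : (0:ℝ) < Real.sqrt Real.pi := Real.sqrt_pos.2 Real.pi_pos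
  have hc : Real.pi ^ 2 * ξ₁ ^ 2 < Real.pi ^ 2 * ξ₂ ^ 2 := by
    have h2 : ξ₁ ^ 2 < ξ₂ ^ 2 := by nlinarith
    exact mul_lt_mul_of_pos_left h2 (by positivity)
  have h0 : (0:ℝ) ≤ Real.pi ^ 2 * ξ₁ ^ 2 := by positivity
  have hJ := KhatAux.J_strictAnti h0 hc
  exact mul_lt_mul_of_pos_left (mul_lt_mul_of_pos_left hJ hπ) hΓ
end

section
/- Define L₀(t) = (1/2π) ∫₀^π (1-cosθ) / [(2-2cosθ) + t²]^{3/2} dθ. Then the Fourier transform L̂₀ satisfies L̂₀(0) = 1/2, and 0 < L̂₀(ξ) ≤ 1/2 for all ξ ∈ ℝ. -/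
open MeasureTheory

/-- `L₀(t) = (1/2π) ∫₀^π (1-cosθ)/[(2-2cosθ)+t²]^{3/2} dθ`. -/
noncomputable def L0 (t : ℝ) : ℝ :=
  (1 / (2 * Real.pi)) *
    ∫ θ in (0 : ℝ)..Real.pi, (1 - Real.cos θ) / ((2 - 2 * Real.cos θ) + t ^ 2) ^ ((3 : ℝ) / 2)

/-- The Fourier transform `L̂₀(ξ) = ∫ e^{-2πiξt} L₀(t) dt`. -/
noncomputable def L0hat (ξ : ℝ) : ℂ :=
  ∫ t : ℝ, Complex.exp ((-(2 * Real.pi * ξ * t) : ℝ) * Complex.I) * (L0 t : ℂ)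

section helpers
open Real Set Function


lemma gauss_cos (s b : ℝ) (hs : 0 < s) :
    ∫ t : ℝ, Real.cos (b * t) * Real.exp (-(s * t ^ 2)) =
      (Real.pi / s) ^ ((1:ℝ)/2) * Real.exp (-(b ^ 2 / (4 * s))) := by
  have hre : (0:ℝ) < ((s:ℂ)).re := by simpa using hs
  have key := fourierIntegral_gaussian (b := (s : ℂ)) hre (b : ℂ)
  have heq : ∀ x : ℝ, Complex.exp (Complex.I * b * x) * Complex.exp (-(s:ℂ) * x ^ 2)
      = Complex.exp (-(s:ℂ) * x ^ 2 + Complex.I * b * x + 0) := fun x => by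
    rw [add_zero, Complex.exp_add]; ring
  have hint : Integrable (fun x : ℝ => Complex.exp (Complex.I * b * x) *
      Complex.exp (-(s:ℂ) * x ^ 2)) :=
    (integrable_cexp_quadratic hre (Complex.I * b) 0).congr
      (Filter.Eventually.of_forall fun x => (heq x).symm)
  have hlhs : (∫ x : ℝ, Complex.exp (Complex.I * b * x) * Complex.exp (-(s:ℂ) * x ^ 2)).re
      = ∫ t : ℝ, Real.cos (b * t) * Real.exp (-(s * t ^ 2)) := by
    rw [← RCLike.re_to_complex, ← integral_re hint]
    refine integral_congr_ae (Filter.Eventually.of_forall fun x => ?_)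
    simp only [RCLike.re_to_complex]
    rw [heq x, Complex.exp_re]
    have hx2 : ((x:ℂ))^2 = ((x^2 : ℝ) : ℂ) := by push_cast; ring
    have h1 : (-(s:ℂ) * x ^ 2 + Complex.I * b * x + 0).re = -(s * x ^ 2) := by simp [← Complex.ofReal_pow]
    have h2 : (-(s:ℂ) * x ^ 2 + Complex.I * b * x + 0).im = b * x := by simp [← Complex.ofReal_pow]
    rw [h1, h2, mul_comm]
  have hrhs : ((Real.pi / s : ℂ) ^ ((1:ℂ)/2) * Complex.exp (-(b:ℂ) ^ 2 / (4 * s))).re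
      = (Real.pi / s) ^ ((1:ℝ)/2) * Real.exp (-(b ^ 2 / (4 * s))) := by
    have h1 : ((Real.pi / s : ℝ) : ℂ) ^ ((1:ℂ)/2) = ((Real.pi / s) ^ ((1:ℝ)/2) : ℝ) := by
      rw [show ((1:ℂ)/2) = (((1:ℝ)/2 : ℝ) : ℂ) by norm_num]
      exact (Complex.ofReal_cpow (by positivity) _).symm
    have h2 : (-(b:ℂ) ^ 2 / (4 * s)) = ((-(b ^ 2 / (4 * s)) : ℝ) : ℂ) := by push_cast; ring
    rw [show ((Real.pi : ℂ) / s) = ((Real.pi / s : ℝ) : ℂ) by push_cast; ring, h1, h2,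
      ← Complex.ofReal_exp, ← Complex.ofReal_mul, Complex.ofReal_re]
  rw [← hlhs, key, hrhs]
lemma exp_int (c : ℝ) (hc : 0 < c) :
    ∫ s in Ioi (0:ℝ), Real.exp (-(c * s)) = 1 / c := by
  have h := integral_rpow_mul_exp_neg_mul_rpow (p := 1) (q := (0:ℝ)) (b := c)
    one_pos (by norm_num) hc
  simp only [Real.rpow_one, Real.rpow_zero, one_mul, neg_mul] at h
  rw [h]; norm_num [Real.Gamma_one, Real.rpow_neg_one]


lemma gamma_rep (c : ℝ) (hc : 0 < c) :
    ∫ s in Ioi (0:ℝ), s ^ ((1:ℝ)/2) * Real.exp (-(c * s)) =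
      Real.Gamma ((3:ℝ)/2) * c ^ (-(3:ℝ)/2) := by
  have h := integral_rpow_mul_exp_neg_mul_rpow (p := 1) (q := (1:ℝ)/2) (b := c)
    one_pos (by norm_num) hc
  simp only [Real.rpow_one, neg_mul] at h ⊢
  rw [h]; norm_num [mul_comm]

section master
variable (a b : ℝ) (ha : 0 < a)

noncomputable def FF (t s : ℝ) : ℝ := Real.cos (b*t) * (s ^ ((1:ℝ)/2) * Real.exp (-((a + t^2) * s)))

lemma FF_cont : Continuous (uncurry (FF a b)) := by
  apply Continuous.mul (by fun_prop)
  apply Continuous.mul ?_ (by fun_prop)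
  exact (continuous_snd.rpow_const (fun x => Or.inr (by norm_num)))

lemma FF_norm_le (s t : ℝ) (hs : 0 < s) :
    ‖FF a b t s‖ ≤ (s ^ ((1:ℝ)/2) * Real.exp (-(a*s))) * Real.exp (-(s * t^2)) := by
  have h1 : Real.exp (-((a + t^2) * s)) = Real.exp (-(a*s)) * Real.exp (-(s*t^2)) := by
    rw [← Real.exp_add]; ring_nf
  simp only [FF, norm_mul, Real.norm_eq_abs, h1]
  rw [abs_of_nonneg (Real.exp_pos _).le, abs_of_nonneg (Real.exp_pos _).le,
    abs_of_nonneg (Real.rpow_nonneg hs.le _)]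
  have hcos := abs_cos_le_one (b*t)
  have hX : 0 ≤ s ^ ((1:ℝ)/2) * (Real.exp (-(a*s)) * Real.exp (-(s*t^2))) :=
    mul_nonneg (Real.rpow_nonneg hs.le _) (by positivity)
  nlinarith [mul_nonneg (sub_nonneg.mpr hcos) hX]

include ha in
lemma FF_integrable :
    Integrable (uncurry (FF a b)) (volume.prod (volume.restrict (Ioi (0:ℝ)))) := by
  rw [integrable_prod_iff' (FF_cont a b).aestronglyMeasurable]
  constructor
  · filter_upwards [ae_restrict_mem measurableSet_Ioi] with s hs
    have hg0 : Integrable (fun t : ℝ => Real.exp (-(s * t^2))) := by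
      have := integrable_exp_neg_mul_sq hs.out
      simpa [neg_mul] using this
    have hg : Integrable (fun t : ℝ => (s ^ ((1:ℝ)/2) * Real.exp (-(a*s))) * Real.exp (-(s * t^2))) :=
      hg0.const_mul _
    exact hg.mono' ((FF_cont a b).comp (by fun_prop)).aestronglyMeasurable
      (Filter.Eventually.of_forall fun t => FF_norm_le a b s t hs.out)
  · have hc : Continuous (uncurry fun t s : ℝ => ‖FF a b t s‖) := by
      have := (FF_cont a b).norm
      exact this
    have hmeas : StronglyMeasurable fun s : ℝ => ∫ t : ℝ, ‖FF a b t s‖ :=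
      hc.stronglyMeasurable.integral_prod_left
    refine Integrable.mono' (g := fun s => Real.sqrt Real.pi * Real.exp (-(a*s))) ?_
      hmeas.aestronglyMeasurable ?_
    · simpa [neg_mul] using ((exp_neg_integrableOn_Ioi 0 ha).const_mul (Real.sqrt Real.pi))
    · filter_upwards [ae_restrict_mem measurableSet_Ioi] with s hs
      have hg0 : Integrable (fun t : ℝ => Real.exp (-(s * t^2))) := by
        have := integrable_exp_neg_mul_sq hs.out
        simpa [neg_mul] using this
      have hg : Integrable (fun t : ℝ => (s ^ ((1:ℝ)/2) * Real.exp (-(a*s))) * Real.exp (-(s * t^2))) :=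
        hg0.const_mul _
      rw [Real.norm_eq_abs, abs_of_nonneg (integral_nonneg fun t => norm_nonneg _)]
      calc ∫ t : ℝ, ‖FF a b t s‖
          ≤ ∫ t : ℝ, (s ^ ((1:ℝ)/2) * Real.exp (-(a*s))) * Real.exp (-(s * t^2)) :=
            integral_mono_of_nonneg (Filter.Eventually.of_forall fun t => norm_nonneg _) hg
              (Filter.Eventually.of_forall fun t => FF_norm_le a b s t hs.out)
        _ = (s ^ ((1:ℝ)/2) * Real.exp (-(a*s))) * Real.sqrt (Real.pi / s) := by
            rw [integral_const_mul]
            congr 1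
            simpa [neg_mul] using integral_gaussian s
        _ = Real.sqrt Real.pi * Real.exp (-(a*s)) := by
            rw [Real.sqrt_div Real.pi_pos.le, ← Real.sqrt_eq_rpow]
            have hss : Real.sqrt s ≠ 0 := ne_of_gt (Real.sqrt_pos.mpr hs.out)
            field_simp

include ha in
lemma master :
    ∫ t : ℝ, Real.cos (b*t) * (a + t^2) ^ (-(3:ℝ)/2)
      = (2:ℝ) * ∫ s in Ioi (0:ℝ), Real.exp (-(a*s) - b^2/(4*s)) := by
  have hswap := integral_integral_swap (f := FF a b) (μ := volume)
    (ν := volume.restrict (Ioi 0)) (FF_integrable a b ha)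
  have hL : ∀ t : ℝ, (∫ s in Ioi (0:ℝ), FF a b t s)
      = Real.Gamma ((3:ℝ)/2) * (Real.cos (b*t) * (a + t^2) ^ (-(3:ℝ)/2)) := by
    intro t
    have hat : (0:ℝ) < a + t^2 := by positivity
    calc ∫ s in Ioi (0:ℝ), FF a b t s
        = Real.cos (b*t) * ∫ s in Ioi (0:ℝ), s ^ ((1:ℝ)/2) * Real.exp (-((a+t^2) * s)) := by
          rw [← integral_const_mul]; rfl
      _ = _ := by rw [gamma_rep _ hat]; ring
  have hR : ∀ s ∈ Ioi (0:ℝ), (∫ t : ℝ, FF a b t s)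
      = Real.sqrt Real.pi * Real.exp (-(a*s) - b^2/(4*s)) := by
    intro s hs
    have hs0 : (0:ℝ) < s := hs
    have hexp : ∀ t : ℝ, FF a b t s
        = (s ^ ((1:ℝ)/2) * Real.exp (-(a*s))) * (Real.cos (b*t) * Real.exp (-(s*t^2))) := by
      intro t
      simp only [FF]
      rw [show Real.exp (-((a + t^2) * s)) = Real.exp (-(a*s)) * Real.exp (-(s*t^2)) by
        rw [← Real.exp_add]; ring_nf]
      ring
    calc ∫ t : ℝ, FF a b t s
        = (s ^ ((1:ℝ)/2) * Real.exp (-(a*s))) * ∫ t : ℝ, Real.cos (b*t) * Real.exp (-(s*t^2)) := by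
          rw [← integral_const_mul]
          exact integral_congr_ae (Filter.Eventually.of_forall hexp)
      _ = (s ^ ((1:ℝ)/2) * Real.exp (-(a*s))) *
            ((Real.pi / s) ^ ((1:ℝ)/2) * Real.exp (-(b ^ 2 / (4 * s)))) := by
          rw [gauss_cos s b hs0]
      _ = Real.sqrt Real.pi * Real.exp (-(a*s) - b^2/(4*s)) := by
          have h1 : s ^ ((1:ℝ)/2) * (Real.pi / s) ^ ((1:ℝ)/2) = Real.sqrt Real.pi := by
            rw [← Real.mul_rpow hs0.le (by positivity), mul_div_cancel₀ _ (ne_of_gt hs0),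
              Real.sqrt_eq_rpow]
          rw [show -(a*s) - b^2/(4*s) = -(a*s) + -(b^2/(4*s)) by ring, Real.exp_add, ← h1]
          ring
  have hG : Real.Gamma ((3:ℝ)/2) = Real.sqrt Real.pi / 2 := by
    have h := Real.Gamma_add_one (s := (1:ℝ)/2) (by norm_num)
    rw [show (1:ℝ)/2 + 1 = 3/2 by norm_num] at h
    rw [h, Real.Gamma_one_half_eq]; ring
  have hL' : (∫ t : ℝ, ∫ s in Ioi (0:ℝ), FF a b t s)
      = Real.Gamma ((3:ℝ)/2) * ∫ t : ℝ, Real.cos (b*t) * (a + t^2) ^ (-(3:ℝ)/2) := by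
    rw [← integral_const_mul]
    exact integral_congr_ae (Filter.Eventually.of_forall hL)
  have hR' : (∫ s in Ioi (0:ℝ), ∫ t : ℝ, FF a b t s)
      = Real.sqrt Real.pi * ∫ s in Ioi (0:ℝ), Real.exp (-(a*s) - b^2/(4*s)) := by
    rw [← integral_const_mul]
    exact setIntegral_congr_fun measurableSet_Ioi hR
  have hpi : Real.sqrt Real.pi ≠ 0 := ne_of_gt (Real.sqrt_pos.mpr Real.pi_pos)
  rw [hL', hR', hG] at hswap
  refine mul_left_cancel₀ hpi ?_
  linear_combination 2 * hswap

end master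

lemma integrable_kernel (a : ℝ) (ha : 0 < a) :
    Integrable (fun t : ℝ => (a + t^2) ^ (-(3:ℝ)/2)) := by
  have h := (FF_integrable a 0 ha).integral_prod_left
  have heq : ∀ t : ℝ, (∫ s in Ioi (0:ℝ), uncurry (FF a 0) (t, s))
      = Real.Gamma ((3:ℝ)/2) * (a + t^2) ^ (-(3:ℝ)/2) := by
    intro t
    have hat : (0:ℝ) < a + t^2 := by positivity
    have h1 : ∀ s : ℝ, uncurry (FF a 0) (t, s)
        = s ^ ((1:ℝ)/2) * Real.exp (-((a + t^2) * s)) := fun s => by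
      simp [FF, uncurry]
    calc (∫ s in Ioi (0:ℝ), uncurry (FF a 0) (t, s))
        = ∫ s in Ioi (0:ℝ), s ^ ((1:ℝ)/2) * Real.exp (-((a + t^2) * s)) :=
          integral_congr_ae (Filter.Eventually.of_forall h1)
      _ = _ := by rw [gamma_rep _ hat]
  have hG : Real.Gamma ((3:ℝ)/2) ≠ 0 := by
    have h := Real.Gamma_add_one (s := (1:ℝ)/2) (by norm_num)
    rw [show (1:ℝ)/2 + 1 = 3/2 by norm_num] at h
    rw [h, Real.Gamma_one_half_eq]
    positivity
  have h2 : Integrable (fun t : ℝ => Real.Gamma ((3:ℝ)/2) * (a + t^2) ^ (-(3:ℝ)/2)) :=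
    h.congr (Filter.Eventually.of_forall heq)
  refine (h2.const_mul (Real.Gamma ((3:ℝ)/2))⁻¹).congr
    (Filter.Eventually.of_forall fun t => ?_)
  field_simp

lemma kernel_eq (a : ℝ) (ha : 0 < a) :
    ∫ t : ℝ, (a + t^2) ^ (-(3:ℝ)/2) = 2 / a := by
  have h := master a 0 ha
  simp only [zero_mul, Real.cos_zero, one_mul, ne_eq, OfNat.ofNat_ne_zero,
    not_false_eq_true, zero_pow, zero_div, sub_zero] at h
  rw [h, exp_int a ha]; ring

lemma master_pos (a b : ℝ) (ha : 0 < a) :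
    0 < ∫ t : ℝ, Real.cos (b*t) * (a + t^2) ^ (-(3:ℝ)/2) := by
  rw [master a b ha]
  have hint : IntegrableOn (fun s : ℝ => Real.exp (-(a*s) - b^2/(4*s))) (Ioi 0) := by
    refine Integrable.mono' (g := fun s => Real.exp (-(a*s))) ?_ ?_ ?_
    · exact (by simpa [neg_mul] using (exp_neg_integrableOn_Ioi 0 ha) : IntegrableOn (fun s : ℝ => Real.exp (-(a*s))) (Ioi 0))
    · apply Measurable.aestronglyMeasurable
      fun_prop
    · filter_upwards [ae_restrict_mem measurableSet_Ioi] with s hs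
      rw [Real.norm_eq_abs, abs_of_nonneg (Real.exp_pos _).le]
      apply Real.exp_le_exp.mpr
      have hs0 : (0:ℝ) < s := hs
      have : 0 ≤ b^2/(4*s) := by positivity
      linarith
  have hpos : 0 < ∫ s in Ioi (0:ℝ), Real.exp (-(a*s) - b^2/(4*s)) := by
    rw [setIntegral_pos_iff_support_of_nonneg_ae
      (Filter.Eventually.of_forall fun s => (Real.exp_pos _).le) hint]
    have hsupp : support (fun s : ℝ => Real.exp (-(a*s) - b^2/(4*s))) = univ := by
      ext x; simp [Real.exp_ne_zero]
    rw [hsupp, univ_inter, Real.volume_Ioi]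
    simp
  linarith

lemma cos_kernel_integrable (a b : ℝ) (ha : 0 < a) :
    Integrable (fun t : ℝ => Real.cos (b*t) * (a + t^2) ^ (-(3:ℝ)/2)) := by
  refine (integrable_kernel a ha).mono' ?_ (Filter.Eventually.of_forall fun t => ?_)
  · apply Continuous.aestronglyMeasurable
    apply Continuous.mul (by fun_prop)
    exact Continuous.rpow_const (by fun_prop) fun t => Or.inl (by show a + t^2 ≠ 0; positivity)
  · rw [Real.norm_eq_abs, abs_mul, abs_of_nonneg (Real.rpow_nonneg (by positivity) _)]
    have h1 := abs_cos_le_one (b*t)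
    have h2 : (0:ℝ) ≤ (a + t^2) ^ (-(3:ℝ)/2) := Real.rpow_nonneg (by positivity) _
    nlinarith

lemma master_le (a b : ℝ) (ha : 0 < a) :
    ∫ t : ℝ, Real.cos (b*t) * (a + t^2) ^ (-(3:ℝ)/2) ≤ 2 / a := by
  rw [← kernel_eq a ha]
  refine integral_mono (cos_kernel_integrable a b ha) (integrable_kernel a ha) fun t => ?_
  have h1 := Real.cos_le_one (b*t)
  have h2 : (0:ℝ) ≤ (a + t^2) ^ (-(3:ℝ)/2) := Real.rpow_nonneg (by positivity) _
  nlinarith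

noncomputable def HH (t θ : ℝ) : ℝ :=
  (1 - Real.cos θ) * ((2 - 2*Real.cos θ) + t^2) ^ (-(3:ℝ)/2)

noncomputable def GG (ξ t θ : ℝ) : ℝ := Real.cos (2*Real.pi*ξ*t) * HH t θ

lemma cos_lt_one_Ioc {θ : ℝ} (hθ : θ ∈ Ioc 0 Real.pi) : Real.cos θ < 1 := by
  have := Real.cos_lt_cos_of_nonneg_of_le_pi (le_refl 0) hθ.2 hθ.1
  simpa using this

lemma GG_slice_integrable (ξ : ℝ) {θ : ℝ} (hθ : θ ∈ Ioc 0 Real.pi) :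
    Integrable (fun t => GG ξ t θ) := by
  have hc : 0 < 1 - Real.cos θ := by linarith [cos_lt_one_Ioc hθ]
  have hA : 0 < 2 - 2*Real.cos θ := by linarith
  have h := (cos_kernel_integrable (2 - 2*Real.cos θ) (2*Real.pi*ξ) hA).const_mul
    (1 - Real.cos θ)
  refine h.congr (Filter.Eventually.of_forall fun t => ?_)
  simp only [GG, HH]; ring

lemma GG_slice_eq (ξ : ℝ) (θ : ℝ) :
    (∫ t : ℝ, GG ξ t θ) = (1 - Real.cos θ) *
      ∫ t : ℝ, Real.cos ((2*Real.pi*ξ)*t) * ((2 - 2*Real.cos θ) + t^2) ^ (-(3:ℝ)/2) := by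
  rw [← integral_const_mul]
  refine integral_congr_ae (Filter.Eventually.of_forall fun t => ?_)
  simp only [GG, HH]; ring

lemma GG_slice_pos (ξ : ℝ) {θ : ℝ} (hθ : θ ∈ Ioc 0 Real.pi) :
    0 < ∫ t : ℝ, GG ξ t θ := by
  have hc : 0 < 1 - Real.cos θ := by linarith [cos_lt_one_Ioc hθ]
  have hA : 0 < 2 - 2*Real.cos θ := by linarith
  rw [GG_slice_eq]
  exact mul_pos hc (master_pos _ _ hA)

lemma GG_slice_le_one (ξ : ℝ) {θ : ℝ} (hθ : θ ∈ Ioc 0 Real.pi) :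
    (∫ t : ℝ, GG ξ t θ) ≤ 1 := by
  have hc : 0 < 1 - Real.cos θ := by linarith [cos_lt_one_Ioc hθ]
  have hA : 0 < 2 - 2*Real.cos θ := by linarith
  rw [GG_slice_eq]
  calc (1 - Real.cos θ) *
      ∫ t : ℝ, Real.cos ((2*Real.pi*ξ)*t) * ((2 - 2*Real.cos θ) + t^2) ^ (-(3:ℝ)/2)
      ≤ (1 - Real.cos θ) * (2 / (2 - 2*Real.cos θ)) :=
        mul_le_mul_of_nonneg_left (master_le _ _ hA) hc.le
    _ = 1 := by field_simp

lemma GG_slice_zero {θ : ℝ} (hθ : θ ∈ Ioc 0 Real.pi) :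
    (∫ t : ℝ, GG 0 t θ) = 1 := by
  have hc : 0 < 1 - Real.cos θ := by linarith [cos_lt_one_Ioc hθ]
  have hA : 0 < 2 - 2*Real.cos θ := by linarith
  rw [GG_slice_eq]
  simp only [mul_zero, zero_mul, Real.cos_zero, one_mul]
  rw [kernel_eq _ hA]
  field_simp

lemma GG_prod_integrable (ξ : ℝ) :
    Integrable (uncurry fun t θ => GG ξ t θ)
      (volume.prod (volume.restrict (Ioc 0 Real.pi))) := by
  have hmeas : Measurable (uncurry fun t θ => GG ξ t θ) := by
    simp only [GG, HH, uncurry]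
    fun_prop
  rw [integrable_prod_iff' hmeas.aestronglyMeasurable]
  constructor
  · filter_upwards [ae_restrict_mem measurableSet_Ioc] with θ hθ
    exact GG_slice_integrable ξ hθ
  · have hsm : StronglyMeasurable fun θ : ℝ => ∫ t : ℝ, ‖GG ξ t θ‖ := by
      have hm2 : StronglyMeasurable (uncurry fun t θ : ℝ => ‖GG ξ t θ‖) :=
        (hmeas.norm).stronglyMeasurable
      exact hm2.integral_prod_left
    refine Integrable.mono' (g := fun _ => (1:ℝ)) ?_ hsm.aestronglyMeasurable ?_
    · exact (integrableOn_const_iff (C := (1:ℝ))).mpr (Or.inr (by simp [Real.volume_Ioc]))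
    · filter_upwards [ae_restrict_mem measurableSet_Ioc] with θ hθ
      have hc : 0 < 1 - Real.cos θ := by linarith [cos_lt_one_Ioc hθ]
      have hA : 0 < 2 - 2*Real.cos θ := by linarith
      rw [Real.norm_eq_abs, abs_of_nonneg (integral_nonneg fun t => norm_nonneg _)]
      have hXint : Integrable
          (fun t : ℝ => (1 - Real.cos θ) * ((2 - 2*Real.cos θ) + t^2) ^ (-(3:ℝ)/2)) :=
        (integrable_kernel _ hA).const_mul _
      calc (∫ t : ℝ, ‖GG ξ t θ‖)
          ≤ ∫ t : ℝ, (1 - Real.cos θ) * ((2 - 2*Real.cos θ) + t^2) ^ (-(3:ℝ)/2) := by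
            refine integral_mono_of_nonneg (Filter.Eventually.of_forall fun t => norm_nonneg _)
              hXint (Filter.Eventually.of_forall fun t => ?_)
            simp only [GG, HH, Real.norm_eq_abs]
            have h1 := abs_cos_le_one (2*Real.pi*ξ*t)
            have h2 : (0:ℝ) ≤ ((2 - 2*Real.cos θ) + t^2) ^ (-(3:ℝ)/2) :=
              Real.rpow_nonneg (by nlinarith [sq_nonneg t]) _
            rw [abs_mul, abs_mul, abs_of_nonneg hc.le, abs_of_nonneg h2]
            nlinarith [mul_nonneg (sub_nonneg.mpr h1) (mul_nonneg hc.le h2)]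
        _ = (1 - Real.cos θ) * (2 / (2 - 2*Real.cos θ)) := by
            rw [integral_const_mul, kernel_eq _ hA]
        _ ≤ 1 := le_of_eq (by field_simp)

lemma L0_eq (t : ℝ) : L0 t = (1/(2*Real.pi)) * ∫ θ in Ioc (0:ℝ) Real.pi, HH t θ := by
  rw [L0, intervalIntegral.integral_of_le Real.pi_pos.le]
  congr 1
  refine setIntegral_congr_fun measurableSet_Ioc fun θ hθ => ?_
  have hY : (0:ℝ) ≤ (2 - 2*Real.cos θ) + t^2 := by nlinarith [Real.cos_le_one θ, sq_nonneg t]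
  simp only [HH]
  rw [show (-(3:ℝ)/2) = -((3:ℝ)/2) by norm_num, Real.rpow_neg hY, div_eq_mul_inv]

lemma L0_integrable : Integrable L0 := by
  have h := (GG_prod_integrable 0).integral_prod_left
  refine (h.const_mul (1/(2*Real.pi))).congr (Filter.Eventually.of_forall fun t => ?_)
  show (1/(2*Real.pi)) * (∫ θ in Set.Ioc (0:ℝ) Real.pi, (uncurry fun t θ => GG 0 t θ) (t, θ)) = L0 t
  rw [L0_eq t]
  have h2 : (∫ θ in Set.Ioc (0:ℝ) Real.pi, (uncurry fun t θ => GG 0 t θ) (t, θ))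
      = ∫ θ in Set.Ioc (0:ℝ) Real.pi, HH t θ :=
    setIntegral_congr_fun measurableSet_Ioc fun θ hθ => by simp [GG, uncurry]
  rw [h2]

lemma L0hat_re (ξ : ℝ) :
    (L0hat ξ).re = ∫ t : ℝ, Real.cos (2*Real.pi*ξ*t) * L0 t := by
  have hint : Integrable
      (fun t : ℝ => Complex.exp ((-(2*Real.pi*ξ*t) : ℝ) * Complex.I) * (L0 t : ℂ)) := by
    refine Integrable.mono' L0_integrable.abs ?_ (Filter.Eventually.of_forall fun t => ?_)
    · refine AEStronglyMeasurable.mul ?_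
        (Complex.continuous_ofReal.comp_aestronglyMeasurable L0_integrable.aestronglyMeasurable)
      apply Continuous.aestronglyMeasurable
      fun_prop
    · rw [norm_mul, Complex.norm_exp]
      simp
  rw [L0hat, ← RCLike.re_to_complex, ← integral_re hint]
  refine integral_congr_ae (Filter.Eventually.of_forall fun t => ?_)
  simp only [RCLike.re_to_complex, Complex.mul_re, Complex.ofReal_re, Complex.ofReal_im,
    mul_zero, sub_zero, Complex.exp_ofReal_mul_I_re, Real.cos_neg]

end helpers

/-- `L̂₀(0) = 1/2` and `0 < L̂₀(ξ) ≤ 1/2`. -/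
theorem L0hat_bounds :
    L0hat 0 = 1 / 2 ∧ ∀ ξ : ℝ, 0 < (L0hat ξ).re ∧ (L0hat ξ).re ≤ 1 / 2 := by
  have key : ∀ ξ : ℝ, (L0hat ξ).re
      = (1/(2*Real.pi)) * ∫ θ in Set.Ioc (0:ℝ) Real.pi, ∫ t : ℝ, GG ξ t θ := by
    intro ξ
    rw [L0hat_re ξ]
    have hswap := MeasureTheory.integral_integral_swap (f := fun t θ => GG ξ t θ)
      (μ := volume) (ν := volume.restrict (Set.Ioc 0 Real.pi)) (GG_prod_integrable ξ)
    calc ∫ t : ℝ, Real.cos (2*Real.pi*ξ*t) * L0 t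
        = ∫ t : ℝ, (1/(2*Real.pi)) * ∫ θ in Set.Ioc (0:ℝ) Real.pi, GG ξ t θ := by
          refine integral_congr_ae (Filter.Eventually.of_forall fun t => ?_)
          show Real.cos (2*Real.pi*ξ*t) * L0 t
            = (1/(2*Real.pi)) * ∫ θ in Set.Ioc (0:ℝ) Real.pi, GG ξ t θ
          rw [L0_eq t]
          have h1 : (∫ θ in Set.Ioc (0:ℝ) Real.pi, GG ξ t θ)
              = Real.cos (2*Real.pi*ξ*t) * ∫ θ in Set.Ioc (0:ℝ) Real.pi, HH t θ := by
            rw [← integral_const_mul]; rfl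
          rw [h1]; ring
      _ = (1/(2*Real.pi)) * ∫ t : ℝ, ∫ θ in Set.Ioc (0:ℝ) Real.pi, GG ξ t θ :=
          integral_const_mul _ _
      _ = _ := by rw [hswap]
  have hphi_int : ∀ ξ : ℝ, IntegrableOn (fun θ => ∫ t : ℝ, GG ξ t θ) (Set.Ioc 0 Real.pi) :=
    fun ξ => (GG_prod_integrable ξ).integral_prod_right
  have hJ_pos : ∀ ξ : ℝ, 0 < ∫ θ in Set.Ioc (0:ℝ) Real.pi, ∫ t : ℝ, GG ξ t θ := by
    intro ξ
    rw [MeasureTheory.setIntegral_pos_iff_support_of_nonneg_ae ?_ (hphi_int ξ)]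
    · refine lt_of_lt_of_le ?_ (measure_mono (fun θ hθ =>
        ⟨ne_of_gt (GG_slice_pos ξ hθ), hθ⟩ :
        Set.Ioc (0:ℝ) Real.pi ⊆ Function.support (fun θ => ∫ t : ℝ, GG ξ t θ) ∩ Set.Ioc 0 Real.pi))
      simp [Real.volume_Ioc, Real.pi_pos]
    · filter_upwards [ae_restrict_mem measurableSet_Ioc] with θ hθ
      exact (GG_slice_pos ξ hθ).le
  have hJ_le : ∀ ξ : ℝ, (∫ θ in Set.Ioc (0:ℝ) Real.pi, ∫ t : ℝ, GG ξ t θ) ≤ Real.pi := by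
    intro ξ
    calc (∫ θ in Set.Ioc (0:ℝ) Real.pi, ∫ t : ℝ, GG ξ t θ)
        ≤ ∫ _θ in Set.Ioc (0:ℝ) Real.pi, (1:ℝ) :=
          MeasureTheory.setIntegral_mono_on (hphi_int ξ)
            ((MeasureTheory.integrableOn_const_iff (C := (1:ℝ))).mpr (Or.inr (by simp [Real.volume_Ioc])))
            measurableSet_Ioc (fun θ hθ => GG_slice_le_one ξ hθ)
      _ = Real.pi := by simp [Real.volume_Ioc, Real.pi_pos.le]
  have hJ0 : (∫ θ in Set.Ioc (0:ℝ) Real.pi, ∫ t : ℝ, GG 0 t θ) = Real.pi := by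
    rw [MeasureTheory.setIntegral_congr_fun measurableSet_Ioc
      (fun θ hθ => GG_slice_zero hθ)]
    simp [Real.volume_Ioc, Real.pi_pos.le]
  have hre0 : (L0hat 0).re = 1/2 := by
    rw [key 0, hJ0]
    field_simp
  refine ⟨?_, fun ξ => ⟨?_, ?_⟩⟩
  · have h0 : L0hat 0 = ((∫ t : ℝ, L0 t : ℝ) : ℂ) := by
      rw [L0hat]
      have heq : ∀ t : ℝ, Complex.exp ((-(2*Real.pi*0*t) : ℝ) * Complex.I) * (L0 t : ℂ)
          = ((L0 t : ℝ) : ℂ) := fun t => by norm_num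
      rw [integral_congr_ae (Filter.Eventually.of_forall heq)]
      exact _root_.integral_ofReal
    rw [h0] at hre0 ⊢
    rw [Complex.ofReal_re] at hre0
    rw [hre0]
    norm_num
  · rw [key ξ]
    exact mul_pos (by positivity) (hJ_pos ξ)
  · rw [key ξ]
    calc (1/(2*Real.pi)) * ∫ θ in Set.Ioc (0:ℝ) Real.pi, ∫ t : ℝ, GG ξ t θ
        ≤ (1/(2*Real.pi)) * Real.pi :=
          mul_le_mul_of_nonneg_left (hJ_le ξ) (by positivity)
      _ = 1/2 := by field_simp
end
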